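/- arXiv:1103.2056 — 5 statements merged into one kernel-verified Lean document; each statement's English description precedes it below -/
import Mathlib

section
/- Let N ≥ 1, let a, b ∈ ℝ^N with a(j) ≤ b(j) for all j, and let f : ℝ^N → ℝ satisfy the Lipschitz condition with constant L > 0 on the hyperinterval [a,b]. If L̂ ≥ √2·L, then for every x ∈ [a,b] one has ½(f(a) + f(b) − L̂‖b − a‖) ≤ f(x); in particular, R(L̂) = ½(f(a) + f(b) − L̂‖b − a‖) is a lower bound for the minimum of f over [a,b]. (Theorem 1 of the paper.) -/
open RealInnerProductSpace


/-- Theorem 1 of the paper: if `L̂ ≥ √2 · L`, then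
`R(L̂) = (f a + f b - L̂‖b - a‖)/2` is a lower bound for `f` over the
hyperinterval `[a, b]`. -/
theorem lower_bound_sqrt_two (N : ℕ) (hN : 1 ≤ N)
    (a b : EuclideanSpace ℝ (Fin N)) (hab : ∀ j, a j ≤ b j)
    (f : EuclideanSpace ℝ (Fin N) → ℝ) (L : ℝ) (hL : 0 < L)
    (hf : ∀ x' x'', (∀ j, a j ≤ x' j ∧ x' j ≤ b j) →
      (∀ j, a j ≤ x'' j ∧ x'' j ≤ b j) → |f x' - f x''| ≤ L * ‖x' - x''‖)
    (Lhat : ℝ) (hLhat : Real.sqrt 2 * L ≤ Lhat) :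
    ∀ x, (∀ j, a j ≤ x j ∧ x j ≤ b j) →
      (f a + f b - Lhat * ‖b - a‖) / 2 ≤ f x := by
  intro x hx
  have h1 : |f a - f x| ≤ L * ‖a - x‖ :=
    hf a x (fun j => ⟨le_refl _, hab j⟩) hx
  have h2 : |f b - f x| ≤ L * ‖b - x‖ :=
    hf b x (fun j => ⟨hab j, le_refl _⟩) hx
  have h1' : f a - f x ≤ L * ‖x - a‖ := by
    rw [← norm_sub_rev]; exact (abs_le.mp h1).2
  have h2' : f b - f x ≤ L * ‖b - x‖ := (abs_le.mp h2).2
  set s := ‖x - a‖ with hs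
  set t := ‖b - x‖ with ht
  set r := ‖b - a‖ with hr
  have hs0 : 0 ≤ s := norm_nonneg _
  have ht0 : 0 ≤ t := norm_nonneg _
  have hr0 : 0 ≤ r := norm_nonneg _
  -- inner product nonneg
  have hinner : 0 ≤ (inner ℝ (x - a) (b - x) : ℝ) := by
    rw [PiLp.inner_apply]
    apply Finset.sum_nonneg
    intro j _
    have h1 := (hx j).1
    have h2 := (hx j).2
    simp only [PiLp.sub_apply, RCLike.inner_apply, conj_trivial]
    have : (0:ℝ) ≤ (x j - a j) * (b j - x j) := mul_nonneg (by linarith) (by linarith)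
    simpa [mul_comm] using this
  have hpyth : s ^ 2 + t ^ 2 ≤ r ^ 2 := by
    have hba : b - a = (b - x) + (x - a) := by abel
    have := norm_add_sq_real (b - x) (x - a)
    rw [← hba] at this
    have hinn : (inner ℝ (b - x) (x - a) : ℝ) = inner ℝ (x - a) (b - x) := real_inner_comm _ _
    nlinarith [this]
  have hst : s + t ≤ Real.sqrt 2 * r := by
    have h2r : (s + t) ^ 2 ≤ 2 * r ^ 2 := by nlinarith [sq_nonneg (s - t)]
    have := Real.sqrt_le_sqrt h2r
    rwa [Real.sqrt_sq (by linarith), Real.sqrt_mul (by norm_num), Real.sqrt_sq hr0] at this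
  have hLs : Real.sqrt 2 * L * r ≤ Lhat * r :=
    mul_le_mul_of_nonneg_right hLhat hr0
  nlinarith [mul_le_mul_of_nonneg_left hst hL.le]
end

section
/- Let N ≥ 1 and let a, b ∈ ℝ^N with a(j) ≤ b(j) for all j. Then for every point x in the hyperinterval [a,b], ‖a − x‖ + ‖b − x‖ ≤ √2·‖b − a‖. (The geometric lemma from Molinaro et al. used in the proof of Theorem 1.) -/
/-- The geometric lemma (Molinaro et al.) used in the proof of Theorem 1:
for every point `x` of the hyperinterval `[a, b]`,
`‖a - x‖ + ‖b - x‖ ≤ √2 · ‖b - a‖`. -/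
theorem sum_dists_le_sqrt_two_diag (N : ℕ) (hN : 1 ≤ N)
    (a b : EuclideanSpace ℝ (Fin N)) (hab : ∀ j, a j ≤ b j) :
    ∀ x : EuclideanSpace ℝ (Fin N), (∀ j, a j ≤ x j ∧ x j ≤ b j) →
      ‖a - x‖ + ‖b - x‖ ≤ Real.sqrt 2 * ‖b - a‖ := by
  intro x hx
  have hsq : ∀ y : EuclideanSpace ℝ (Fin N), ‖y‖ ^ 2 = ∑ j, y j ^ 2 := by
    intro y
    rw [EuclideanSpace.norm_eq,
      Real.sq_sqrt (Finset.sum_nonneg fun i _ => sq_nonneg _)]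
    simp [Real.norm_eq_abs, sq_abs]
  have key : ‖a - x‖ ^ 2 + ‖b - x‖ ^ 2 ≤ ‖b - a‖ ^ 2 := by
    rw [hsq, hsq, hsq, ← Finset.sum_add_distrib]
    apply Finset.sum_le_sum
    intro j _
    have h1 := (hx j).1
    have h2 := (hx j).2
    simp only [PiLp.sub_apply]
    nlinarith
  have hA : (0:ℝ) ≤ ‖a - x‖ := norm_nonneg _
  have hB : (0:ℝ) ≤ ‖b - x‖ := norm_nonneg _
  have hD : (0:ℝ) ≤ ‖b - a‖ := norm_nonneg _
  have h2 : Real.sqrt 2 ^ 2 = 2 := Real.sq_sqrt (by norm_num)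
  have hs : (0:ℝ) ≤ Real.sqrt 2 := Real.sqrt_nonneg _
  nlinarith [sq_nonneg (‖a - x‖ - ‖b - x‖), mul_nonneg hs hD]
end

section
/- Let N ≥ 1, let a, b ∈ ℝ^N with a(j) ≤ b(j) for all j, and let f : ℝ^N → ℝ satisfy the Lipschitz condition with constant L > 0 on the hyperinterval [a,b]. If L̂ ≥ 2·L, then for every x ∈ [a,b] one has ½(f(a) + f(b) − L̂‖b − a‖) ≤ f(x). (Pintér's condition (12), the weaker predecessor of Theorem 1.) -/
lemma norm_le_of_abs_le {N : ℕ} (u v : EuclideanSpace ℝ (Fin N))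
    (h : ∀ j, |u j| ≤ |v j|) : ‖u‖ ≤ ‖v‖ := by
  rw [EuclideanSpace.norm_eq, EuclideanSpace.norm_eq]
  apply Real.sqrt_le_sqrt
  apply Finset.sum_le_sum
  intro j _
  rw [Real.norm_eq_abs, Real.norm_eq_abs]
  exact pow_le_pow_left₀ (abs_nonneg _) (h j) 2

/-- Pintér's condition: if `L̂ ≥ 2L`, then
`(f a + f b - L̂‖b - a‖)/2` is a lower bound for `f` over the
hyperinterval `[a, b]`. -/
theorem lower_bound_two_L (N : ℕ) (hN : 1 ≤ N)
    (a b : EuclideanSpace ℝ (Fin N)) (hab : ∀ j, a j ≤ b j)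
    (f : EuclideanSpace ℝ (Fin N) → ℝ) (L : ℝ) (hL : 0 < L)
    (hf : ∀ x' x'', (∀ j, a j ≤ x' j ∧ x' j ≤ b j) →
      (∀ j, a j ≤ x'' j ∧ x'' j ≤ b j) → |f x' - f x''| ≤ L * ‖x' - x''‖)
    (Lhat : ℝ) (hLhat : 2 * L ≤ Lhat) :
    ∀ x, (∀ j, a j ≤ x j ∧ x j ≤ b j) →
      (f a + f b - Lhat * ‖b - a‖) / 2 ≤ f x := by
  intro x hx
  have hain : ∀ j, a j ≤ a j ∧ a j ≤ b j := fun j => ⟨le_refl _, hab j⟩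
  have hbin : ∀ j, a j ≤ b j ∧ b j ≤ b j := fun j => ⟨hab j, le_refl _⟩
  have h1 := (abs_le.mp (hf a x hain hx)).2
  have h2 := (abs_le.mp (hf b x hbin hx)).2
  have hxa : ‖a - x‖ ≤ ‖b - a‖ := by
    apply norm_le_of_abs_le
    intro j
    simp only [PiLp.sub_apply]
    rw [abs_of_nonpos (by linarith [(hx j).1]), abs_of_nonneg (by linarith [hab j])]
    linarith [(hx j).2]
  have hbx : ‖b - x‖ ≤ ‖b - a‖ := by
    apply norm_le_of_abs_le
    intro j
    simp only [PiLp.sub_apply]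
    rw [abs_of_nonneg (by linarith [(hx j).2]), abs_of_nonneg (by linarith [hab j])]
    linarith [(hx j).1]
  have hba : (0:ℝ) ≤ ‖b - a‖ := norm_nonneg _
  have e1 : L * ‖a - x‖ ≤ L * ‖b - a‖ := mul_le_mul_of_nonneg_left hxa hL.le
  have e2 : L * ‖b - x‖ ≤ L * ‖b - a‖ := mul_le_mul_of_nonneg_left hbx hL.le
  have e3 : 2 * L * ‖b - a‖ ≤ Lhat * ‖b - a‖ := mul_le_mul_of_nonneg_right hLhat hba
  linarith
end

section
/- Let (d_i, F_i) ∈ (0,∞) × ℝ, i ∈ I, be a finite nonempty family representing hyperintervals, let S = {(d_i, F_i) : i ∈ I} ⊆ ℝ², and let t ∈ I. Then t is non-dominated (i.e., there exists L > 0 such that no i ∈ I satisfies F_i − L·d_i < F_t − L·d_t) if and only if (d_t, F_t) does not belong to the set convexHull(S) + {(u, v) ∈ ℝ² : u ≤ 0, v ≥ 0, (u, v) ≠ (0, 0)}. (Theorem 2 of the paper: the non-dominated hyperintervals are exactly those located on the lower-right convex hull of the set of dots representing the hyperintervals.) -/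
open Pointwise

/-- Theorem 2 of the paper: a hyperinterval `t` is non-dominated (i.e., it
has the smallest lower bound `R_t(L) = F_t - L·d_t` for some estimate
`L > 0` of the Lipschitz constant) if and only if the dot `(d_t, F_t)` lies
on the lower-right convex hull of the set of dots representing the
hyperintervals, i.e., `(d_t, F_t)` does not belong to the Minkowski sum of
the convex hull of the dots with the cone `{(u,v) : u ≤ 0, v ≥ 0, (u,v) ≠ 0}`. -/
theorem nondominated_iff_lower_right_convex_hull (I : Type*) [Fintype I]
    [Nonempty I] (d F : I → ℝ) (hd : ∀ i, 0 < d i) (t : I) :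
    (∃ L > (0 : ℝ), ∀ i, ¬(F i - L * d i < F t - L * d t)) ↔
      (d t, F t) ∉ convexHull ℝ (Set.range fun i => (d i, F i)) +
        {p : ℝ × ℝ | p.1 ≤ 0 ∧ 0 ≤ p.2 ∧ p ≠ 0} := by
  set S : Set (ℝ × ℝ) := Set.range fun i => (d i, F i) with hS
  constructor
  · rintro ⟨L, hL, hmin⟩ hmem
    rw [Set.mem_add] at hmem
    obtain ⟨q, hq, c, ⟨hc1, hc2, hc0⟩, hqc⟩ := hmem
    have hH : convexHull ℝ S ⊆ {p : ℝ × ℝ | F t - L * d t ≤ p.2 - L * p.1} := by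
      apply convexHull_min
      · rintro p ⟨i, rfl⟩
        have := hmin i
        simp only [not_lt] at this
        simpa using this
      · intro x hx y hy μ ν hμ hν hμν
        simp only [Set.mem_setOf_eq] at hx hy ⊢
        simp only [Prod.fst_add, Prod.snd_add, Prod.smul_fst, Prod.smul_snd, smul_eq_mul]
        have hν' : ν = 1 - μ := by linarith
        subst hν'
        nlinarith [mul_le_mul_of_nonneg_left hx hμ, mul_le_mul_of_nonneg_left hy hν]
    have hq' := hH hq
    simp only [Set.mem_setOf_eq] at hq'
    have h1 : q.1 + c.1 = d t := congrArg Prod.fst hqc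
    have h2 : q.2 + c.2 = F t := congrArg Prod.snd hqc
    have hcpos : 0 < c.2 - L * c.1 := by
      rcases lt_or_eq_of_le hc1 with h | h
      · nlinarith
      · have hc2' : c.2 ≠ 0 := by
          intro h2'
          exact hc0 (Prod.ext (by simpa using h) (by simpa using h2'))
        have : 0 < c.2 := lt_of_le_of_ne hc2 (Ne.symm hc2')
        nlinarith
    have e1 : L * q.1 = L * d t - L * c.1 := by rw [← h1]; ring
    have e2 : q.2 = F t - c.2 := by linarith
    linarith
  · intro hmem
    by_contra hno
    push_neg at hno
    -- key : any point of the hull weakly dominating (d t, F t) gives a contradiction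
    have key : ∀ q : ℝ × ℝ, q ∈ convexHull ℝ S → d t ≤ q.1 → q.2 ≤ F t →
        q ≠ (d t, F t) → False := by
      intro q hq hq1 hq2 hq3
      apply hmem
      rw [Set.mem_add]
      refine ⟨q, hq, (d t - q.1, F t - q.2), ⟨by simpa using hq1, by simpa using hq2, ?_⟩, ?_⟩
      · intro hc0
        apply hq3
        rw [Prod.ext_iff] at hc0 ⊢
        simp only [Prod.fst_zero, Prod.snd_zero] at hc0
        constructor <;> [linarith [hc0.1]; linarith [hc0.2]]
      · apply Prod.ext <;> simp <;> ring
    set a : I → ℝ := fun i => d i - d t with ha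
    set b : I → ℝ := fun i => F i - F t with hb
    by_cases hA : ∃ i, (b i < 0 ∧ 0 ≤ a i) ∨ (b i ≤ 0 ∧ 0 < a i)
    · obtain ⟨i, hi⟩ := hA
      refine key (d i, F i) (subset_convexHull ℝ S ⟨i, rfl⟩) ?_ ?_ ?_
      · rcases hi with ⟨_, h2⟩ | ⟨_, h2⟩ <;> simp [ha] at h2 <;> linarith
      · rcases hi with ⟨h1, _⟩ | ⟨h1, _⟩ <;> simp [hb] at h1 <;> linarith
      · intro hne
        rw [Prod.ext_iff] at hne
        rcases hi with ⟨h1, h2⟩ | ⟨h1, h2⟩ <;> simp [ha, hb] at h1 h2 <;>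
          [linarith [hne.2]; linarith [hne.1]]
    · push_neg at hA
      have h' : ∀ L, 0 < L → ∃ i, (0 < a i ∧ 0 < b i ∧ b i < L * a i) ∨
          (a i < 0 ∧ b i < 0 ∧ b i < L * a i) := by
        intro L hL
        obtain ⟨i, hi⟩ := hno L hL
        have hib : b i < L * a i := by simp only [ha, hb]; ring_nf; ring_nf at hi; linarith
        refine ⟨i, ?_⟩
        rcases lt_trichotomy (a i) 0 with h | h | h
        · have : b i < 0 := by nlinarith
          exact Or.inr ⟨h, this, hib⟩
        · have hbneg : b i < 0 := by rw [h] at hib; linarith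
          have := (hA i).1 hbneg
          exact absurd this (by rw [h]; exact lt_irrefl 0)
        · have hbpos : 0 < b i := by
            by_contra hbn
            push_neg at hbn
            have := (hA i).2 hbn
            linarith
          exact Or.inl ⟨h, hbpos, hib⟩
      -- P nonempty
      have hP : ∃ i, 0 < a i ∧ 0 < b i := by
        set L₀ : ℝ := 1 + ∑ i, |b i / a i| with hL₀def
        have hL₀ : 0 < L₀ := by
          have h0 : (0:ℝ) ≤ ∑ i, |b i / a i| := Finset.sum_nonneg fun i _ => abs_nonneg _
          rw [hL₀def]; linarith
        obtain ⟨i, hi⟩ := h' L₀ hL₀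
        rcases hi with ⟨h1, h2, _⟩ | ⟨h1, h2, h3⟩
        · exact ⟨i, h1, h2⟩
        · exfalso
          have hlt : L₀ < b i / a i := (lt_div_iff_of_neg h1).mpr h3
          have hle : b i / a i ≤ |b i / a i| := le_abs_self _
          have hsum : |b i / a i| ≤ ∑ j, |b j / a j| :=
            Finset.single_le_sum (f := fun j => |b j / a j|)
              (fun j _ => abs_nonneg (b j / a j)) (Finset.mem_univ i)
          rw [hL₀def] at hlt
          linarith
      obtain ⟨i₁, hi₁⟩ := hP
      obtain ⟨i₀, hi₀mem, hmin⟩ := Finset.exists_min_image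
        (Finset.univ.filter fun i => 0 < a i ∧ 0 < b i) (fun i => b i / a i)
        ⟨i₁, by simp [hi₁.1, hi₁.2]⟩
      simp only [Finset.mem_filter, Finset.mem_univ, true_and] at hi₀mem
      obtain ⟨hai₀, hbi₀⟩ := hi₀mem
      set α : ℝ := b i₀ / a i₀ with hα
      have hαpos : 0 < α := div_pos hbi₀ hai₀
      obtain ⟨i, hi⟩ := h' α hαpos
      rcases hi with ⟨h1, h2, h3⟩ | ⟨h1, h2, h3⟩
      · exfalso
        have hge : α ≤ b i / a i := hmin i (by simp [h1, h2])
        have hlt : b i / a i < α := (div_lt_iff₀ h1).mpr h3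
        linarith
      · -- i₀ ∈ P achieving min α, i ∈ N with b i < α * a i
        have hcancel : α * a i₀ = b i₀ := div_mul_cancel₀ (b i₀) (ne_of_gt hai₀)
        have hkey : b i * a i₀ < b i₀ * a i := by
          nlinarith [mul_lt_mul_of_pos_right h3 hai₀]
        set s : ℝ := a i₀ - a i with hsdef
        have hs : 0 < s := by simp only [hsdef]; linarith
        set μ : ℝ := -a i / s with hμdef
        set ν : ℝ := a i₀ / s with hνdef
        have hμ : 0 ≤ μ := div_nonneg (by linarith) hs.le
        have hν : 0 ≤ ν := div_nonneg hai₀.le hs.le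
        have hμν : μ + ν = 1 := by
          rw [hμdef, hνdef, ← add_div, hsdef]
          rw [div_eq_one_iff_eq (show a i₀ - a i ≠ 0 from ne_of_gt hs)]
          ring
        set q : ℝ × ℝ := μ • ((d i₀, F i₀) : ℝ × ℝ) + ν • ((d i, F i) : ℝ × ℝ) with hqdef
        have hqmem : q ∈ convexHull ℝ S :=
          (convex_convexHull ℝ S) (subset_convexHull ℝ S ⟨i₀, rfl⟩)
            (subset_convexHull ℝ S ⟨i, rfl⟩) hμ hν hμν
        have hq1 : q.1 = d t := by
          simp only [hqdef, Prod.fst_add, Prod.smul_fst, smul_eq_mul, hμdef, hνdef]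
          have hdi₀ : d i₀ = d t + a i₀ := by simp [ha]
          have hdi : d i = d t + a i := by simp [ha]
          rw [hdi₀, hdi]
          field_simp
          ring
        have hq2 : q.2 < F t := by
          simp only [hqdef, Prod.snd_add, Prod.smul_snd, smul_eq_mul, hμdef, hνdef]
          have hFi₀ : F i₀ = F t + b i₀ := by simp [hb]
          have hFi : F i = F t + b i := by simp [hb]
          rw [hFi₀, hFi]
          have hnum : -a i * b i₀ + a i₀ * b i < 0 := by nlinarith
          have : (-a i * (F t + b i₀) + a i₀ * (F t + b i)) / s < F t := by
            rw [div_lt_iff₀ hs]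
            have hsval : F t * s = F t * a i₀ - F t * a i := by rw [hsdef]; ring
            nlinarith [hnum, hsval]
          calc -a i / s * (F t + b i₀) + a i₀ / s * (F t + b i)
              = (-a i * (F t + b i₀) + a i₀ * (F t + b i)) / s := by ring
            _ < F t := this
        refine key q hqmem (le_of_eq hq1.symm) hq2.le ?_
        intro hne
        rw [Prod.ext_iff] at hne
        linarith [hne.2]
end

section
/- Let N ≥ 1, let a, b ∈ ℝ^N with a(j) ≤ b(j) for all j and a ≠ b, and let i be a coordinate on which the side length is maximal: b(i) − a(i) = max_j (b(j) − a(j)) = Δ. If [a,b] is trisected along coordinate i, then the common diagonal length d' of the three resulting boxes satisfies d'² = ‖b − a‖² − (8/9)Δ² ≤ (1 − 8/(9N))·‖b − a‖². (Trisecting a longest side contracts the diagonal by a factor bounded away from 1, depending only on the dimension; this drives the diagonals of successive groups to zero.) -/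
/-- Trisecting a longest side contracts the diagonal by a factor bounded
away from 1, depending only on the dimension: if `b i - a i = max_j (b j - a j)`
and `[a, b]` is trisected along coordinate `i`, then the common diagonal
length `d'` of the three children (here expressed via the child `[a, b₁]`)
satisfies `d'² = ‖b - a‖² - (8/9)Δ² ≤ (1 - 8/(9N))·‖b - a‖²`. -/
theorem trisection_diagonal_contraction (N : ℕ) (hN : 1 ≤ N)
    (a b : EuclideanSpace ℝ (Fin N)) (hab : ∀ j, a j ≤ b j) (hne : a ≠ b)
    (i : Fin N) (hi : ∀ j, b j - a j ≤ b i - a i)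
    (b1 : EuclideanSpace ℝ (Fin N))
    (hb1i : b1 i = a i + (b i - a i) / 3) (hb1 : ∀ j, j ≠ i → b1 j = b j) :
    ‖b1 - a‖ ^ 2 = ‖b - a‖ ^ 2 - (8 / 9) * (b i - a i) ^ 2 ∧
      ‖b1 - a‖ ^ 2 ≤ (1 - 8 / (9 * (N : ℝ))) * ‖b - a‖ ^ 2 := by
  have key : ∀ x : EuclideanSpace ℝ (Fin N), ‖x‖ ^ 2 = ∑ j, (x j) ^ 2 := by
    intro x
    rw [EuclideanSpace.norm_eq, Real.sq_sqrt (by positivity)]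
    simp [Real.norm_eq_abs, sq_abs]
  have hsub : ∀ (x y : EuclideanSpace ℝ (Fin N)) (j : Fin N),
      (x - y) j = x j - y j := fun _ _ _ => rfl
  have h1 : ‖b1 - a‖ ^ 2 = ∑ j, (b1 j - a j) ^ 2 := by
    rw [key]; simp [hsub]
  have h2 : ‖b - a‖ ^ 2 = ∑ j, (b j - a j) ^ 2 := by
    rw [key]; simp [hsub]
  have hsplit1 : ∑ j, (b1 j - a j) ^ 2
      = (b1 i - a i) ^ 2 + ∑ j ∈ Finset.univ.erase i, (b1 j - a j) ^ 2 :=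
    (Finset.add_sum_erase _ _ (Finset.mem_univ i)).symm
  have hsplit2 : ∑ j, (b j - a j) ^ 2
      = (b i - a i) ^ 2 + ∑ j ∈ Finset.univ.erase i, (b j - a j) ^ 2 :=
    (Finset.add_sum_erase _ _ (Finset.mem_univ i)).symm
  have hsame : ∑ j ∈ Finset.univ.erase i, (b1 j - a j) ^ 2
      = ∑ j ∈ Finset.univ.erase i, (b j - a j) ^ 2 := by
    refine Finset.sum_congr rfl fun j hj => ?_
    rw [hb1 j (Finset.ne_of_mem_erase hj)]
  have heq : ‖b1 - a‖ ^ 2 = ‖b - a‖ ^ 2 - (8 / 9) * (b i - a i) ^ 2 := by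
    rw [h1, h2, hsplit1, hsplit2, hsame, hb1i]
    ring
  refine ⟨heq, ?_⟩
  -- second part
  have hN' : (0 : ℝ) < N := by exact_mod_cast hN
  have hbound : ‖b - a‖ ^ 2 ≤ N * (b i - a i) ^ 2 := by
    rw [h2]
    calc ∑ j, (b j - a j) ^ 2 ≤ ∑ _j : Fin N, (b i - a i) ^ 2 := by
          refine Finset.sum_le_sum fun j _ => ?_
          have h0 : (0:ℝ) ≤ b j - a j := sub_nonneg.mpr (hab j)
          exact pow_le_pow_left₀ h0 (hi j) 2
      _ = N * (b i - a i) ^ 2 := by simp [mul_comm]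
  rw [heq]
  have : 8 / (9 * (N : ℝ)) * ‖b - a‖ ^ 2 ≤ (8 / 9) * (b i - a i) ^ 2 := by
    rw [div_mul_eq_mul_div, div_le_iff₀ (by positivity)]
    nlinarith [hbound]
  nlinarith [this]
end
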